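/- Let d n : ℕ with d, n ≥ 1. Let ρA : Matrix (Fin d) (Fin d) ℂ be positive definite and let μ : Fin n → ℝ with 0 < μ s for all s. Let σ½ := ρA½ ⊗ₖ Matrix.diagonal (fun s => (Real.sqrt (μ s) : ℂ)), where ρA½ is the positive semidefinite square root of ρA. Then { X : Matrix (Fin d × Fin n) (Fin d × Fin n) ℂ | Γ(X) is positive semidefinite } equals the closure (in the topology of the matrix space) of the set of all matrices of the form ∑ k, ∑ l, (a l ⊗ₖ (b k)ᴴ) * σ½ * ((a k)ᴴ ⊗ₖ b l), where k, l range over Fin N for some N : ℕ, a : Fin N → Matrix (Fin d) (Fin d) ℂ and b : Fin N → Matrix (Fin n) (Fin n) ℂ. -/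

import Mathlib

open Matrix ComplexOrder Kronecker

/-- Partial transpose with respect to the second tensor factor. -/
def partialTranspose {d n : ℕ} (X : Matrix (Fin d × Fin n) (Fin d × Fin n) ℂ) :
    Matrix (Fin d × Fin n) (Fin d × Fin n) ℂ :=
  fun p q => X (p.1, q.2) (q.1, p.2)

/-- σ½ = ρA^{1/2} ⊗ₖ diagonal(√μ): the square root of the product density matrix. -/
noncomputable def sigmaHalf {d n : ℕ} (ρA : Matrix (Fin d) (Fin d) ℂ) (hρA : ρA.PosDef)
    (μ : Fin n → ℝ) : Matrix (Fin d × Fin n) (Fin d × Fin n) ℂ :=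
  ((hρA.posSemidef.1.eigenvectorUnitary : Matrix (Fin d) (Fin d) ℂ) *
    Matrix.diagonal ((↑) ∘ Real.sqrt ∘ hρA.posSemidef.1.eigenvalues : Fin d → ℂ) *
    star (hρA.posSemidef.1.eigenvectorUnitary : Matrix (Fin d) (Fin d) ℂ)) ⊗ₖ Matrix.diagonal (fun s => ((Real.sqrt (μ s) : ℝ) : ℂ))

noncomputable def Matrix.PosSemidef.sqrt {m : Type*} [Fintype m] [DecidableEq m]
    {A : Matrix m m ℂ} (hA : A.PosSemidef) : Matrix m m ℂ :=
  (hA.1.eigenvectorUnitary : Matrix m m ℂ) *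
    Matrix.diagonal ((↑) ∘ Real.sqrt ∘ hA.1.eigenvalues : m → ℂ) *
    star (hA.1.eigenvectorUnitary : Matrix m m ℂ)

lemma Matrix.PosSemidef.posSemidef_sqrt {m : Type*} [Fintype m] [DecidableEq m]
    {A : Matrix m m ℂ} (hA : A.PosSemidef) : hA.sqrt.PosSemidef := by
  unfold Matrix.PosSemidef.sqrt
  exact (posSemidef_diagonal_iff.mpr fun i => by
    simp [Real.sqrt_nonneg]).mul_mul_conjTranspose_same _

lemma Matrix.PosSemidef.sqrt_mul_self {m : Type*} [Fintype m] [DecidableEq m]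
    {A : Matrix m m ℂ} (hA : A.PosSemidef) : hA.sqrt * hA.sqrt = A := by
  unfold Matrix.PosSemidef.sqrt
  set U := (hA.1.eigenvectorUnitary : Matrix m m ℂ) with hUdef
  have hU : star U * U = 1 := Unitary.coe_star_mul_self _
  calc U * Matrix.diagonal ((↑) ∘ Real.sqrt ∘ hA.1.eigenvalues : m → ℂ) * star U *
        (U * Matrix.diagonal ((↑) ∘ Real.sqrt ∘ hA.1.eigenvalues : m → ℂ) * star U)
      = U * (Matrix.diagonal ((↑) ∘ Real.sqrt ∘ hA.1.eigenvalues : m → ℂ) *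
        Matrix.diagonal ((↑) ∘ Real.sqrt ∘ hA.1.eigenvalues : m → ℂ)) * star U := by
        simp only [mul_assoc]; rw [← mul_assoc (star U) U, hU, one_mul]
    _ = A := by
        rw [diagonal_mul_diagonal]
        conv_rhs => rw [hA.1.spectral_theorem]
        rw [Unitary.conjStarAlgAut_apply]
        congr 2
        refine congrArg Matrix.diagonal (funext fun i => ?_)
        simp [← Complex.ofReal_mul, Real.mul_self_sqrt (hA.eigenvalues_nonneg i)]

lemma sigmaHalf_eq {d n : ℕ} (ρA : Matrix (Fin d) (Fin d) ℂ) (hρA : ρA.PosDef)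
    (μ : Fin n → ℝ) : sigmaHalf ρA hρA μ
      = hρA.posSemidef.sqrt ⊗ₖ Matrix.diagonal (fun s => ((Real.sqrt (μ s) : ℝ) : ℂ)) := rfl

section Aux

variable {d n : ℕ}

lemma pt_pt (X : Matrix (Fin d × Fin n) (Fin d × Fin n) ℂ) :
    partialTranspose (partialTranspose X) = X := rfl

lemma pt_kron (A : Matrix (Fin d) (Fin d) ℂ) (B : Matrix (Fin n) (Fin n) ℂ) :
    partialTranspose (A ⊗ₖ B) = A ⊗ₖ Bᵀ := rfl

lemma pt_sum {ι : Type*} (s : Finset ι) (f : ι → Matrix (Fin d × Fin n) (Fin d × Fin n) ℂ) :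
    partialTranspose (∑ k ∈ s, f k) = ∑ k ∈ s, partialTranspose (f k) := by
  ext p q
  simp [partialTranspose, Matrix.sum_apply]

lemma kron_conjT (A : Matrix (Fin d) (Fin d) ℂ) (B : Matrix (Fin n) (Fin n) ℂ) :
    (A ⊗ₖ B)ᴴ = Aᴴ ⊗ₖ Bᴴ := by
  ext ⟨i, s⟩ ⟨j, t⟩
  simp [Matrix.conjTranspose_apply, Matrix.kroneckerMap_apply, star_mul']

lemma pt_continuous : Continuous (partialTranspose (d := d) (n := n)) :=
  continuous_pi fun p => continuous_pi fun q =>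
    (continuous_apply (q.1, p.2)).comp (continuous_apply (p.1, q.2))

lemma isClosed_psd {m : Type*} [Fintype m] [DecidableEq m] :
    IsClosed {A : Matrix m m ℂ | A.PosSemidef} := by
  have h : {A : Matrix m m ℂ | A.PosSemidef}
      = {A : Matrix m m ℂ | Aᴴ = A} ∩ ⋂ x : m → ℂ, {A | 0 ≤ star x ⬝ᵥ A *ᵥ x} := by
    ext A
    simp only [Set.mem_setOf_eq, Set.mem_inter_iff, Set.mem_iInter]
    exact ⟨fun h => ⟨h.1, h.dotProduct_mulVec_nonneg⟩, fun h => .of_dotProduct_mulVec_nonneg h.1 h.2⟩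
  rw [h]
  refine IsClosed.inter (isClosed_eq continuous_id.matrix_conjTranspose continuous_id)
    (isClosed_iInter fun x => ?_)
  exact isClosed_le continuous_const
    (continuous_const.dotProduct (continuous_id.matrix_mulVec continuous_const))

lemma key_identity {N : ℕ} (ρh : Matrix (Fin d) (Fin d) ℂ) (D : Fin n → ℂ)
    (a : Fin N → Matrix (Fin d) (Fin d) ℂ) (b : Fin N → Matrix (Fin n) (Fin n) ℂ) :
    partialTranspose (∑ k, ∑ l,
        (a l ⊗ₖ (b k)ᴴ) * (ρh ⊗ₖ Matrix.diagonal D) * ((a k)ᴴ ⊗ₖ b l))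
      = (∑ k, a k ⊗ₖ (b k)ᵀ) * (ρh ⊗ₖ Matrix.diagonal D)
        * (∑ k, a k ⊗ₖ (b k)ᵀ)ᴴ := by
  have hR : (∑ k, a k ⊗ₖ (b k)ᵀ) * (ρh ⊗ₖ Matrix.diagonal D) * (∑ k, a k ⊗ₖ (b k)ᵀ)ᴴ
      = ∑ k, ∑ l, (a k * ρh * (a l)ᴴ) ⊗ₖ ((b k)ᵀ * Matrix.diagonal D * ((b l)ᵀ)ᴴ) := by
    rw [conjTranspose_sum, Finset.sum_mul, Finset.sum_mul]
    refine Finset.sum_congr rfl fun k _ => ?_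
    rw [Finset.mul_sum]
    refine Finset.sum_congr rfl fun l _ => ?_
    rw [kron_conjT, ← mul_kronecker_mul, ← mul_kronecker_mul]
  rw [hR, pt_sum]
  have hL : ∀ k, partialTranspose (∑ l,
        (a l ⊗ₖ (b k)ᴴ) * (ρh ⊗ₖ Matrix.diagonal D) * ((a k)ᴴ ⊗ₖ b l))
      = ∑ l, (a l * ρh * (a k)ᴴ) ⊗ₖ ((b k)ᴴ * Matrix.diagonal D * b l)ᵀ := by
    intro k
    rw [pt_sum]
    refine Finset.sum_congr rfl fun l _ => ?_
    rw [← mul_kronecker_mul, ← mul_kronecker_mul, pt_kron]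
  simp only [hL]
  rw [Finset.sum_comm]
  refine Finset.sum_congr rfl fun k _ => Finset.sum_congr rfl fun l _ => ?_
  have hbt : ((b l)ᴴ)ᵀ = ((b l)ᵀ)ᴴ := rfl
  rw [transpose_mul, transpose_mul, diagonal_transpose, hbt]
  simp only [mul_assoc]

lemma exists_kron_decomp (M : Matrix (Fin d × Fin n) (Fin d × Fin n) ℂ) :
    ∃ (N : ℕ) (a : Fin N → Matrix (Fin d) (Fin d) ℂ) (b : Fin N → Matrix (Fin n) (Fin n) ℂ),
      M = ∑ k, a k ⊗ₖ b k := by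
  classical
  let e : Fin (Fintype.card ((Fin d × Fin d) × (Fin n × Fin n))) ≃
      ((Fin d × Fin d) × (Fin n × Fin n)) :=
    (Fintype.equivFin ((Fin d × Fin d) × (Fin n × Fin n))).symm
  let A : ((Fin d × Fin d) × (Fin n × Fin n)) → Matrix (Fin d) (Fin d) ℂ :=
    fun x => Matrix.single x.1.1 x.1.2 (M (x.1.1, x.2.1) (x.1.2, x.2.2))
  let B : ((Fin d × Fin d) × (Fin n × Fin n)) → Matrix (Fin n) (Fin n) ℂ :=
    fun x => Matrix.single x.2.1 x.2.2 1
  have h2 : M = ∑ x : ((Fin d × Fin d) × (Fin n × Fin n)), A x ⊗ₖ B x := by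
    ext ⟨i, s⟩ ⟨j, t⟩
    simp only [Matrix.sum_apply, Matrix.kroneckerMap_apply, A, B, Matrix.single,
      Matrix.of_apply]
    simp [Fintype.sum_prod_type, ite_and, mul_ite, ite_mul, Finset.sum_ite_eq,
      Finset.sum_ite_eq']
  exact ⟨Fintype.card ((Fin d × Fin d) × (Fin n × Fin n)), fun k => A (e k), fun k => B (e k),
    h2.trans (Equiv.sum_comp e fun x => A x ⊗ₖ B x).symm⟩

lemma sigmaHalf_posSemidef (ρA : Matrix (Fin d) (Fin d) ℂ) (hρA : ρA.PosDef)
    (μ : Fin n → ℝ) (hμ : ∀ s, 0 < μ s) : (sigmaHalf ρA hρA μ).PosSemidef := by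
  set q := hρA.posSemidef.posSemidef_sqrt.sqrt with hq
  set C : Matrix (Fin d × Fin n) (Fin d × Fin n) ℂ :=
    q ⊗ₖ Matrix.diagonal (fun s => ((Real.sqrt (Real.sqrt (μ s)) : ℝ) : ℂ)) with hC
  have hstar : (star fun s : Fin n => ((Real.sqrt (Real.sqrt (μ s)) : ℝ) : ℂ))
      = fun s : Fin n => ((Real.sqrt (Real.sqrt (μ s)) : ℝ) : ℂ) :=
    funext fun s => Complex.conj_ofReal _
  have hCH : Cᴴ = C := by
    rw [hC, kron_conjT, hρA.posSemidef.posSemidef_sqrt.posSemidef_sqrt.isHermitian,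
      diagonal_conjTranspose, hstar]
  have hdiag : (fun s : Fin n => ((Real.sqrt (Real.sqrt (μ s)) : ℝ) : ℂ)
        * ((Real.sqrt (Real.sqrt (μ s)) : ℝ) : ℂ))
      = fun s : Fin n => ((Real.sqrt (μ s) : ℝ) : ℂ) := by
    funext s
    rw [← Complex.ofReal_mul, Real.mul_self_sqrt (Real.sqrt_nonneg _)]
  have hCC : C * C = sigmaHalf ρA hρA μ := by
    rw [hC, ← mul_kronecker_mul, hρA.posSemidef.posSemidef_sqrt.sqrt_mul_self,
      diagonal_mul_diagonal, hdiag, sigmaHalf_eq]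
  have := Matrix.posSemidef_conjTranspose_mul_self C
  rwa [hCH, hCC] at this

lemma sigmaHalf_det_ne_zero (ρA : Matrix (Fin d) (Fin d) ℂ) (hρA : ρA.PosDef)
    (μ : Fin n → ℝ) (hμ : ∀ s, 0 < μ s) : (sigmaHalf ρA hρA μ).det ≠ 0 := by
  rw [sigmaHalf_eq, det_kronecker]
  have h1 : hρA.posSemidef.sqrt.det ≠ 0 := by
    intro h
    have h2 : hρA.posSemidef.sqrt.det * hρA.posSemidef.sqrt.det = ρA.det := by
      rw [← det_mul, hρA.posSemidef.sqrt_mul_self]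
    rw [h, mul_zero] at h2
    exact hρA.det_pos.ne' h2.symm
  have h2 : (Matrix.diagonal (fun s => ((Real.sqrt (μ s) : ℝ) : ℂ))).det ≠ 0 := by
    rw [det_diagonal]
    refine Finset.prod_ne_zero_iff.mpr fun s _ => ?_
    exact_mod_cast (Real.sqrt_pos.mpr (hμ s)).ne'
  exact mul_ne_zero (pow_ne_zero _ h1) (pow_ne_zero _ h2)

end Aux

theorem stmt_4 {d n : ℕ} (hd : 1 ≤ d) (hn : 1 ≤ n)
    (ρA : Matrix (Fin d) (Fin d) ℂ) (hρA : ρA.PosDef)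
    (μ : Fin n → ℝ) (hμ : ∀ s, 0 < μ s) :
    { X : Matrix (Fin d × Fin n) (Fin d × Fin n) ℂ | (partialTranspose X).PosSemidef } =
      closure { X : Matrix (Fin d × Fin n) (Fin d × Fin n) ℂ |
        ∃ (N : ℕ) (a : Fin N → Matrix (Fin d) (Fin d) ℂ)
          (b : Fin N → Matrix (Fin n) (Fin n) ℂ),
          X = ∑ k, ∑ l,
            (a l ⊗ₖ (b k)ᴴ) * sigmaHalf ρA hρA μ * ((a k)ᴴ ⊗ₖ b l) } := by
  set S := { X : Matrix (Fin d × Fin n) (Fin d × Fin n) ℂ |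
    ∃ (N : ℕ) (a : Fin N → Matrix (Fin d) (Fin d) ℂ)
      (b : Fin N → Matrix (Fin n) (Fin n) ℂ),
      X = ∑ k, ∑ l, (a l ⊗ₖ (b k)ᴴ) * sigmaHalf ρA hρA μ * ((a k)ᴴ ⊗ₖ b l) } with hS
  have hσpsd := sigmaHalf_posSemidef ρA hρA μ hμ
  have hσdet := sigmaHalf_det_ne_zero ρA hρA μ hμ
  have hSsub : S ⊆ { X | (partialTranspose X).PosSemidef } := by
    rintro X ⟨N, a, b, rfl⟩
    simp only [Set.mem_setOf_eq, sigmaHalf]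
    rw [key_identity]
    have := hσpsd.mul_mul_conjTranspose_same (∑ k, a k ⊗ₖ (b k)ᵀ)
    rwa [sigmaHalf] at this
  have hclosed : IsClosed { X : Matrix (Fin d × Fin n) (Fin d × Fin n) ℂ |
      (partialTranspose X).PosSemidef } :=
    isClosed_psd.preimage pt_continuous
  refine Set.Subset.antisymm ?_ (closure_minimal hSsub hclosed)
  intro X hX
  refine subset_closure ?_
  -- construct the representation
  set T := hσpsd.sqrt with hT
  have hTH : Tᴴ = T := hσpsd.posSemidef_sqrt.isHermitian
  have hTdet : IsUnit T.det := by
    rw [isUnit_iff_ne_zero]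
    intro h
    have h2 : T.det * T.det = (sigmaHalf ρA hρA μ).det := by
      rw [← det_mul, hσpsd.sqrt_mul_self]
    rw [h, mul_zero] at h2
    exact hσdet h2.symm
  set M := hX.sqrt * T⁻¹ with hM
  have hMH : Mᴴ = T⁻¹ * hX.sqrt := by
    rw [hM, conjTranspose_mul, conjTranspose_nonsing_inv, hTH,
      hX.posSemidef_sqrt.isHermitian]
  have hMσM : M * sigmaHalf ρA hρA μ * Mᴴ = partialTranspose X := by
    rw [hMH, hM, ← hσpsd.sqrt_mul_self, ← hT]
    simp only [mul_assoc]
    rw [Matrix.nonsing_inv_mul_cancel_left _ _ hTdet,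
      Matrix.mul_nonsing_inv_cancel_left _ _ hTdet]
    exact hX.sqrt_mul_self
  obtain ⟨N, a, c, hdec⟩ := exists_kron_decomp M
  refine ⟨N, a, fun k => (c k)ᵀ, ?_⟩
  have hkey := key_identity (hρA.posSemidef.sqrt)
    (fun s => ((Real.sqrt (μ s) : ℝ) : ℂ)) a (fun k => (c k)ᵀ)
  simp only [transpose_transpose] at hkey
  rw [← hdec] at hkey
  have hσ : (hρA.posSemidef.sqrt ⊗ₖ Matrix.diagonal (fun s => ((Real.sqrt (μ s) : ℝ) : ℂ)))
      = sigmaHalf ρA hρA μ := rfl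
  rw [hσ] at hkey
  rw [hMσM] at hkey
  have := congrArg partialTranspose hkey
  rw [pt_pt, pt_pt] at this
  exact this.symm
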